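/- arXiv:2212.06999 — 2 statements merged into one kernel-verified Lean document; each statement's English description precedes it below -/
import Mathlib

section
/- For all i, j ∈ {1,…,c}, the maps σ_i and σ_j anticommute: for every subset S ⊆ {1,…,r}, σ_i(σ_j(ε_S)) + σ_j(σ_i(ε_S)) = 0, i.e., σ_i ∘ σ_j + σ_j ∘ σ_i = 0 as maps T_k → T_{k+2}. -/
open MvPolynomial

/-- The position `p_{t,S}` of `t` in `S ∪ {t}`: one plus the number of elements of `S`
smaller than `t`. -/
def taylorPos {r : ℕ} (S : Finset (Fin r)) (t : Fin r) : ℕ :=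
  (S.filter fun s => s < t).card + 1

variable (𝕜 : Type*) [Field 𝕜] {n r : ℕ}

/-- `m_S`: the lcm of the monomials `m_j = x^{v j}` for `j ∈ S` (equal to `1` when `S = ∅`). -/
noncomputable def taylorLcm (v : Fin r → (Fin n →₀ ℕ)) (S : Finset (Fin r)) :
    MvPolynomial (Fin n) 𝕜 :=
  monomial (S.sup v) 1

/-- The matrix entry of the Taylor differential: `(-1)^{k-i} m_S / m_{S∖{s}}`
(where `i = p_{s,S}` is the position of `s` in `S` and `k = |S|`). -/
noncomputable def taylorEntry (v : Fin r → (Fin n →₀ ℕ)) (S : Finset (Fin r)) (s : Fin r) :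
    MvPolynomial (Fin n) 𝕜 :=
  (-1) ^ (S.card - taylorPos S s) * monomial (S.sup v - (S.erase s).sup v) 1

/-- The matrix entry of the homotopy `σ`:
`(-1)^{k - p_{t,S} - 1} f_t m_t m_S / m_{S ∪ {t}}` (where `k = |S|`); the sign is written as
`(-1)^{k + p_{t,S} + 1}`, which agrees with `(-1)^{k - p_{t,S} - 1}` since the exponents have
the same parity. -/
noncomputable def htpyEntry (v : Fin r → (Fin n →₀ ℕ)) (f : Fin r → MvPolynomial (Fin n) 𝕜)
    (S : Finset (Fin r)) (t : Fin r) : MvPolynomial (Fin n) 𝕜 :=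
  (-1) ^ (S.card + taylorPos S t + 1) *
    (f t * monomial (v t + S.sup v - (insert t S).sup v) 1)

/-- The total module of the Taylor complex: the free `Q`-module with basis
`{ε_S : S ⊆ {1,…,r}}`; the basis element `ε_S` is `Finsupp.single S 1`. -/
abbrev TaylorModule (n r : ℕ) := Finset (Fin r) →₀ MvPolynomial (Fin n) 𝕜

/-- The Taylor differential `τ` on the total module,
`τ(ε_S) = Σ_{s ∈ S} (-1)^{|S| - p_{s,S}} (m_S / m_{S∖{s}}) ε_{S∖{s}}`. -/
noncomputable def taylorTau (v : Fin r → (Fin n →₀ ℕ)) :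
    TaylorModule 𝕜 n r →ₗ[MvPolynomial (Fin n) 𝕜] TaylorModule 𝕜 n r :=
  Finsupp.lsum (MvPolynomial (Fin n) 𝕜) fun S =>
    LinearMap.toSpanSingleton _ _
      (∑ s ∈ S, Finsupp.single (S.erase s) (taylorEntry 𝕜 v S s))

/-- The homotopy `σ` attached to a coefficient family `f` (with `a = Σ_j f_j m_j`):
`σ(ε_S) = Σ_{t ∉ S} (-1)^{|S| - p_{t,S} - 1} (f_t m_t m_S / m_{S∪{t}}) ε_{S∪{t}}`. -/
noncomputable def taylorHtpy (v : Fin r → (Fin n →₀ ℕ)) (f : Fin r → MvPolynomial (Fin n) 𝕜) :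
    TaylorModule 𝕜 n r →ₗ[MvPolynomial (Fin n) 𝕜] TaylorModule 𝕜 n r :=
  Finsupp.lsum (MvPolynomial (Fin n) 𝕜) fun S =>
    LinearMap.toSpanSingleton _ _
      (∑ t ∈ Sᶜ, Finsupp.single (insert t S) (htpyEntry 𝕜 v f S t))


lemma taylor_exp_add (v : Fin r → (Fin n →₀ ℕ)) (S : Finset (Fin r)) (t u : Fin r) :
    (v u + (insert t S).sup v - (insert u (insert t S)).sup v) +
      (v t + S.sup v - (insert t S).sup v) =
    v u + v t + S.sup v - (insert u (insert t S)).sup v := by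
  have h1 : (insert u (insert t S)).sup v ≤ v u + (insert t S).sup v := by
    rw [Finset.sup_insert]; exact sup_le le_self_add le_add_self
  have h2 : (insert t S).sup v ≤ v t + S.sup v := by
    rw [Finset.sup_insert]; exact sup_le le_self_add le_add_self
  rw [tsub_add_tsub_comm h1 h2]
  have h3 : v u + (insert t S).sup v + (v t + S.sup v)
      = (v u + v t + S.sup v) + (insert t S).sup v := by abel
  rw [h3, add_tsub_add_eq_tsub_right]

lemma taylorPos_insert (S : Finset (Fin r)) {t u : Fin r} (ht : t ∉ S) :
    taylorPos (insert t S) u = taylorPos S u + if t < u then 1 else 0 := by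
  unfold taylorPos
  rw [Finset.filter_insert]
  split
  · rw [Finset.card_insert_of_notMem fun h => ht (Finset.mem_filter.mp h).1]
  · omega

lemma neg_one_pow_add_cancel {R : Type*} [CommRing R] {a b : ℕ} (h : (a + b) % 2 = 1) (x : R) :
    (-1) ^ a * x + (-1) ^ b * x = 0 := by
  rcases Nat.even_or_odd a with h1 | h1
  · have h2 : Odd b := by
      rw [Nat.even_iff] at h1; rw [Nat.odd_iff]; omega
    rw [h1.neg_one_pow, h2.neg_one_pow]; ring
  · have h2 : Even b := by
      rw [Nat.odd_iff] at h1; rw [Nat.even_iff]; omega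
    rw [h1.neg_one_pow, h2.neg_one_pow]; ring

lemma htpyEntry_key (v : Fin r → (Fin n →₀ ℕ)) (g h : Fin r → MvPolynomial (Fin n) 𝕜)
    {S : Finset (Fin r)} {t u : Fin r} (ht : t ∉ S) (hu : u ∉ S) (htu : t ≠ u) :
    htpyEntry 𝕜 v g S t * htpyEntry 𝕜 v h (insert t S) u +
      htpyEntry 𝕜 v h S u * htpyEntry 𝕜 v g (insert u S) t = 0 := by
  have hmon : ∀ A B : Fin n →₀ ℕ,
      (monomial A (1 : 𝕜)) * monomial B 1 = monomial (A + B) 1 := by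
    intro A B; rw [monomial_mul, one_mul]
  set W := v u + v t + S.sup v - (insert u (insert t S)).sup v with hW
  have m1 : (monomial (v u + (insert t S).sup v - (insert u (insert t S)).sup v) (1 : 𝕜)) *
      monomial (v t + S.sup v - (insert t S).sup v) 1 = monomial W 1 := by
    rw [hmon, taylor_exp_add]
  have m2 : (monomial (v t + (insert u S).sup v - (insert t (insert u S)).sup v) (1 : 𝕜)) *
      monomial (v u + S.sup v - (insert u S).sup v) 1 = monomial W 1 := by
    rw [hmon, taylor_exp_add, hW, Finset.insert_comm, add_comm (v t) (v u)]
  have hpar : ((S.card + taylorPos S t + 1) + ((insert t S).card + taylorPos (insert t S) u + 1)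
      + ((S.card + taylorPos S u + 1) + ((insert u S).card + taylorPos (insert u S) t + 1)))
        % 2 = 1 := by
    rw [taylorPos_insert S ht, taylorPos_insert S hu,
      Finset.card_insert_of_notMem ht, Finset.card_insert_of_notMem hu]
    rcases lt_or_gt_of_ne htu with hlt | hlt
    · rw [if_pos hlt, if_neg (not_lt.mpr hlt.le)]; omega
    · rw [if_neg (not_lt.mpr hlt.le), if_pos hlt]; omega
  unfold htpyEntry
  calc ((-1) ^ (S.card + taylorPos S t + 1) *
          (g t * monomial (v t + S.sup v - (insert t S).sup v) 1)) *
        ((-1) ^ ((insert t S).card + taylorPos (insert t S) u + 1) *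
          (h u * monomial (v u + (insert t S).sup v - (insert u (insert t S)).sup v) 1)) +
      ((-1) ^ (S.card + taylorPos S u + 1) *
          (h u * monomial (v u + S.sup v - (insert u S).sup v) 1)) *
        ((-1) ^ ((insert u S).card + taylorPos (insert u S) t + 1) *
          (g t * monomial (v t + (insert u S).sup v - (insert t (insert u S)).sup v) 1))
      = (-1) ^ ((S.card + taylorPos S t + 1) + ((insert t S).card + taylorPos (insert t S) u + 1))
          * (g t * h u *
            ((monomial (v u + (insert t S).sup v - (insert u (insert t S)).sup v) 1) *
              monomial (v t + S.sup v - (insert t S).sup v) 1)) +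
        (-1) ^ ((S.card + taylorPos S u + 1) + ((insert u S).card + taylorPos (insert u S) t + 1))
          * (g t * h u *
            ((monomial (v t + (insert u S).sup v - (insert t (insert u S)).sup v) 1) *
              monomial (v u + S.sup v - (insert u S).sup v) 1)) := by
        rw [pow_add, pow_add]; ring
    _ = (-1) ^ ((S.card + taylorPos S t + 1) + ((insert t S).card + taylorPos (insert t S) u + 1))
          * (g t * h u * monomial W 1) +
        (-1) ^ ((S.card + taylorPos S u + 1) + ((insert u S).card + taylorPos (insert u S) t + 1))
          * (g t * h u * monomial W 1) := by rw [m1, m2]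
    _ = 0 := neg_one_pow_add_cancel hpar _

lemma htpyEntry_key' (v : Fin r → (Fin n →₀ ℕ)) (g h : Fin r → MvPolynomial (Fin n) 𝕜)
    {S : Finset (Fin r)} {t u : Fin r} (ht : t ∉ S) (hu : u ∉ S) (htu : t ≠ u) :
    htpyEntry 𝕜 v h S u * htpyEntry 𝕜 v g (insert u S) t +
      htpyEntry 𝕜 v g S t * htpyEntry 𝕜 v h (insert t S) u = 0 := by
  rw [add_comm]; exact htpyEntry_key 𝕜 v g h ht hu htu

lemma taylorHtpy_single (v : Fin r → (Fin n →₀ ℕ)) (g : Fin r → MvPolynomial (Fin n) 𝕜)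
    (S : Finset (Fin r)) (p : MvPolynomial (Fin n) 𝕜) :
    taylorHtpy 𝕜 v g (Finsupp.single S p) =
      ∑ t ∈ Sᶜ, Finsupp.single (insert t S) (p * htpyEntry 𝕜 v g S t) := by
  rw [taylorHtpy, Finsupp.lsum_single, LinearMap.toSpanSingleton_apply, Finset.smul_sum]
  simp [Finsupp.smul_single, smul_eq_mul]

lemma htpy_htpy_single (v : Fin r → (Fin n →₀ ℕ))
    (g g' : Fin r → MvPolynomial (Fin n) 𝕜) (S : Finset (Fin r)) :
    taylorHtpy 𝕜 v g' (taylorHtpy 𝕜 v g (Finsupp.single S 1)) =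
      ∑ t ∈ Sᶜ, ∑ u ∈ Sᶜ, if u ≠ t then
        Finsupp.single (insert u (insert t S))
          (htpyEntry 𝕜 v g S t * htpyEntry 𝕜 v g' (insert t S) u) else 0 := by
  rw [taylorHtpy_single, map_sum]
  refine Finset.sum_congr rfl fun t ht => ?_
  rw [one_mul, taylorHtpy_single, Finset.compl_insert, ← Finset.filter_ne',
    Finset.sum_filter]

set_option maxHeartbeats 1000000 in
/-- For all `i, j ∈ {1,…,c}`, the homotopies `σ_i` and `σ_j` anticommute. -/
theorem taylor_htpy_anticommute {𝕜 : Type*} [Field 𝕜] {n r c : ℕ}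
    (v : Fin r → (Fin n →₀ ℕ)) (a : Fin c → MvPolynomial (Fin n) 𝕜)
    (f : Fin c → Fin r → MvPolynomial (Fin n) 𝕜)
    (ha : ∀ i, a i = ∑ j : Fin r, f i j * monomial (v j) 1) :
    ∀ i j : Fin c,
      (∀ S : Finset (Fin r),
        taylorHtpy 𝕜 v (f i) (taylorHtpy 𝕜 v (f j) (Finsupp.single S 1)) +
          taylorHtpy 𝕜 v (f j) (taylorHtpy 𝕜 v (f i) (Finsupp.single S 1)) = 0) ∧
      taylorHtpy 𝕜 v (f i) ∘ₗ taylorHtpy 𝕜 v (f j) +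
        taylorHtpy 𝕜 v (f j) ∘ₗ taylorHtpy 𝕜 v (f i) = 0 := by
  intro i j
  have hpart1 : ∀ S : Finset (Fin r),
      taylorHtpy 𝕜 v (f i) (taylorHtpy 𝕜 v (f j) (Finsupp.single S 1)) +
        taylorHtpy 𝕜 v (f j) (taylorHtpy 𝕜 v (f i) (Finsupp.single S 1)) = 0 := by
    intro S
    rw [htpy_htpy_single, htpy_htpy_single, Finset.sum_comm (s := Sᶜ) (t := Sᶜ),
      ← Finset.sum_add_distrib]
    refine Finset.sum_eq_zero fun t ht => ?_
    rw [← Finset.sum_add_distrib]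
    refine Finset.sum_eq_zero fun u hu => ?_
    by_cases h : u = t
    · simp [h]
    · rw [if_pos h, if_pos (Ne.symm h), Finset.insert_comm t u, ← Finsupp.single_add,
        htpyEntry_key' 𝕜 v (f i) (f j) (Finset.mem_compl.mp ht) (Finset.mem_compl.mp hu)
          (fun hh => h hh.symm), Finsupp.single_zero]
  refine ⟨hpart1, ?_⟩
  refine Finsupp.lhom_ext fun S x => ?_
  have hx : (Finsupp.single S x : TaylorModule 𝕜 n r) = x • Finsupp.single S 1 := by
    rw [Finsupp.smul_single', mul_one]
  simp only [LinearMap.add_apply, LinearMap.comp_apply, LinearMap.zero_apply, hx,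
    map_smul, ← smul_add, hpart1, smul_zero]
end

section
/- In the hypersurface case c = 1, the endomorphism D = τ + σ₁ of the total Taylor module T = ⊕_{k=0}^{r} T_k (the free Q-module with basis {ε_S : S ⊆ {1,…,r}}) satisfies D² = a₁ · id_T; in particular, the restrictions of D between the even part ⊕_{|S| even} Q ε_S and the odd part ⊕_{|S| odd} Q ε_S form a matrix factorization of a₁. -/
open MvPolynomial

section PosLemmas
variable {r : ℕ} {S : Finset (Fin r)} {s t u : Fin r}

lemma pos_le_card (hs : s ∈ S) : taylorPos S s ≤ S.card := by
  have h1 : (S.filter fun x => x < s) ⊆ S.erase s := by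
    intro x hx
    rw [Finset.mem_filter] at hx
    exact Finset.mem_erase.2 ⟨ne_of_lt hx.2, hx.1⟩
  have h2 := Finset.card_le_card h1
  have h3 := Finset.card_erase_of_mem hs
  have h4 : 1 ≤ S.card := Finset.card_pos.2 ⟨s, hs⟩
  unfold taylorPos
  omega

lemma pos_erase_self : taylorPos (S.erase s) s = taylorPos S s := by
  unfold taylorPos
  rw [Finset.filter_erase, Finset.erase_eq_of_notMem (by simp)]

lemma pos_insert_self : taylorPos (insert t S) t = taylorPos S t := by
  unfold taylorPos
  rw [Finset.filter_insert, if_neg (lt_irrefl t)]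

lemma pos_erase_of_lt (hs : s ∈ S) (h : s < t) :
    taylorPos (S.erase s) t + 1 = taylorPos S t := by
  have hmem : s ∈ S.filter (fun x => x < t) := Finset.mem_filter.2 ⟨hs, h⟩
  have hcard : 1 ≤ (S.filter fun x => x < t).card := Finset.card_pos.2 ⟨s, hmem⟩
  unfold taylorPos
  rw [Finset.filter_erase, Finset.card_erase_of_mem hmem]
  omega

lemma pos_erase_of_not_lt (h : ¬ s < t) : taylorPos (S.erase s) t = taylorPos S t := by
  unfold taylorPos
  rw [Finset.filter_erase, Finset.erase_eq_of_notMem (by simp [h])]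

lemma pos_insert_of_lt (hu : u ∉ S) (h : u < t) :
    taylorPos (insert u S) t = taylorPos S t + 1 := by
  unfold taylorPos
  rw [Finset.filter_insert, if_pos h, Finset.card_insert_of_notMem (by simp [hu])]

lemma pos_insert_of_not_lt (h : ¬ u < t) :
    taylorPos (insert u S) t = taylorPos S t := by
  unfold taylorPos
  rw [Finset.filter_insert, if_neg h]

end PosLemmas

section SignLemmas
variable {R : Type*} [Ring R]

lemma neg_one_pow_sub' {a b : ℕ} (h : b ≤ a) : ((-1 : R)) ^ (a - b) = (-1) ^ (a + b) := by
  conv_rhs => rw [show a + b = (a - b) + 2 * b by omega]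
  rw [pow_add, pow_mul, neg_one_sq, one_pow, mul_one]

lemma sign_cancel {a b : ℕ} (h : (a + 1) % 2 = b % 2) (M : R) :
    (-1) ^ a * M + (-1) ^ b * M = 0 := by
  have hb : (-1 : R) ^ b = -(-1) ^ a := by
    rcases Nat.even_or_odd a with ha | ha
    · have ha' := Nat.even_iff.1 ha
      have hbo : Odd b := Nat.odd_iff.2 (by omega)
      rw [Odd.neg_one_pow hbo, Even.neg_one_pow ha]
    · have ha' := Nat.odd_iff.1 ha
      have hbo : Even b := Nat.even_iff.2 (by omega)
      rw [Even.neg_one_pow hbo, Odd.neg_one_pow ha, neg_neg]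
  rw [hb, neg_mul]
  exact add_neg_cancel _
end SignLemmas

section KeyMul
variable (𝕜 : Type*) [Field 𝕜] {n r : ℕ}

lemma key_tt (a b : ℕ) (e1 e2 : Fin n →₀ ℕ) :
    ((-1) ^ a * monomial e1 1) * ((-1) ^ b * monomial e2 1)
      = (-1) ^ (a + b) * monomial (e1 + e2) (1 : 𝕜) := by
  rw [mul_mul_mul_comm, ← pow_add, monomial_mul, one_mul]

lemma key_th (a b : ℕ) (e1 e2 : Fin n →₀ ℕ) (g : MvPolynomial (Fin n) 𝕜) :
    ((-1) ^ a * monomial e1 1) * ((-1) ^ b * (g * monomial e2 1))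
      = (-1) ^ (a + b) * (g * monomial (e1 + e2) 1) := by
  rw [mul_mul_mul_comm, ← pow_add]
  congr 1
  rw [mul_left_comm, monomial_mul, one_mul]

lemma key_ht (a b : ℕ) (e1 e2 : Fin n →₀ ℕ) (g : MvPolynomial (Fin n) 𝕜) :
    ((-1) ^ a * (g * monomial e1 1)) * ((-1) ^ b * monomial e2 1)
      = (-1) ^ (a + b) * (g * monomial (e1 + e2) 1) := by
  rw [mul_mul_mul_comm, ← pow_add]
  congr 1
  rw [mul_assoc, monomial_mul, one_mul]

lemma key_hh (a b : ℕ) (e1 e2 : Fin n →₀ ℕ) (g1 g2 : MvPolynomial (Fin n) 𝕜) :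
    ((-1) ^ a * (g1 * monomial e1 1)) * ((-1) ^ b * (g2 * monomial e2 1))
      = (-1) ^ (a + b) * ((g1 * g2) * monomial (e1 + e2) 1) := by
  rw [mul_mul_mul_comm, ← pow_add]
  congr 1
  rw [mul_mul_mul_comm, monomial_mul, one_mul]

end KeyMul

section SupLemmas
variable {n r : ℕ} (v : Fin r → (Fin n →₀ ℕ))

lemma sup_insert_le' (t : Fin r) (S : Finset (Fin r)) :
    (insert t S).sup v ≤ v t + S.sup v := by
  rw [Finset.sup_insert]
  exact sup_le (self_le_add_right _ _) (self_le_add_left _ _)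

lemma sup_point {S T : Finset (Fin r)} (h : S ⊆ T) (x : Fin n) :
    (S.sup v) x ≤ (T.sup v) x := Finsupp.le_def.1 (Finset.sup_mono h) x

lemma sup_insert_point (t : Fin r) (S : Finset (Fin r)) (x : Fin n) :
    ((insert t S).sup v) x ≤ v t x + (S.sup v) x := by
  have := Finsupp.le_def.1 (sup_insert_le' v t S) x
  simpa using this

end SupLemmas

variable (𝕜 : Type*) [Field 𝕜] {n r : ℕ}

section Cancel
variable {𝕜} (v : Fin r → (Fin n →₀ ℕ)) (f : Fin r → MvPolynomial (Fin n) 𝕜)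

lemma pos_one_le (S : Finset (Fin r)) (s : Fin r) : 1 ≤ taylorPos S s := by
  unfold taylorPos; omega

lemma tt_cancel_aux {S : Finset (Fin r)} {s s' : Fin r} (hs : s ∈ S) (hs' : s' ∈ S)
    (h : s < s') :
    taylorEntry 𝕜 v S s * taylorEntry 𝕜 v (S.erase s) s'
      + taylorEntry 𝕜 v S s' * taylorEntry 𝕜 v (S.erase s') s = 0 := by
  have hne : s ≠ s' := ne_of_lt h
  have hs'e : s' ∈ S.erase s := Finset.mem_erase.2 ⟨hne.symm, hs'⟩
  have hse' : s ∈ S.erase s' := Finset.mem_erase.2 ⟨hne, hs⟩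
  have hc1 : (S.erase s).card = S.card - 1 := Finset.card_erase_of_mem hs
  have hc2 : (S.erase s').card = S.card - 1 := Finset.card_erase_of_mem hs'
  have hk : 1 ≤ S.card := Finset.card_pos.2 ⟨s, hs⟩
  have hp : taylorPos S s ≤ S.card := pos_le_card hs
  have hq : taylorPos S s' ≤ S.card := pos_le_card hs'
  have hq2 : taylorPos (S.erase s) s' ≤ (S.erase s).card := pos_le_card hs'e
  have hp2 : taylorPos (S.erase s') s ≤ (S.erase s').card := pos_le_card hse'
  have hq' : taylorPos (S.erase s) s' + 1 = taylorPos S s' := pos_erase_of_lt hs h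
  have hp' : taylorPos (S.erase s') s = taylorPos S s := pos_erase_of_not_lt (not_lt.2 h.le)
  unfold taylorEntry
  rw [neg_one_pow_sub' hp, neg_one_pow_sub' hq, neg_one_pow_sub' hq2, neg_one_pow_sub' hp2,
    key_tt, key_tt]
  have hexp : (S.sup v - (S.erase s).sup v) + ((S.erase s).sup v - ((S.erase s).erase s').sup v)
      = (S.sup v - (S.erase s').sup v) + ((S.erase s').sup v - ((S.erase s').erase s).sup v) := by
    rw [Finset.erase_right_comm (a := s) (b := s')]
    ext x
    have h1 := sup_point v (S.erase_subset s) x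
    have h2 := sup_point v (S.erase_subset s') x
    have h3 := sup_point v ((S.erase s).erase_subset s') x
    have h4 := sup_point v ((S.erase s').erase_subset s) x
    rw [Finset.erase_right_comm (a := s) (b := s')] at h3
    simp only [Finsupp.add_apply, Finsupp.tsub_apply]
    omega
  rw [hexp]
  exact sign_cancel (by omega) _

lemma tt_cancel {S : Finset (Fin r)} {s s' : Fin r} (hs : s ∈ S) (hs' : s' ∈ S)
    (hne : s ≠ s') :
    taylorEntry 𝕜 v S s * taylorEntry 𝕜 v (S.erase s) s'
      + taylorEntry 𝕜 v S s' * taylorEntry 𝕜 v (S.erase s') s = 0 := by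
  rcases hne.lt_or_gt with h | h
  · exact tt_cancel_aux v hs hs' h
  · rw [add_comm]; exact tt_cancel_aux v hs' hs h

lemma hh_cancel_aux {S : Finset (Fin r)} {t t' : Fin r} (ht : t ∉ S) (ht' : t' ∉ S)
    (h : t < t') :
    htpyEntry 𝕜 v f S t * htpyEntry 𝕜 v f (insert t S) t'
      + htpyEntry 𝕜 v f S t' * htpyEntry 𝕜 v f (insert t' S) t = 0 := by
  have hq' : taylorPos (insert t S) t' = taylorPos S t' + 1 := pos_insert_of_lt ht h
  have hp' : taylorPos (insert t' S) t = taylorPos S t := pos_insert_of_not_lt (not_lt.2 h.le)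
  have hc1 : (insert t S).card = S.card + 1 := Finset.card_insert_of_notMem ht
  have hc2 : (insert t' S).card = S.card + 1 := Finset.card_insert_of_notMem ht'
  unfold htpyEntry
  rw [key_hh, key_hh, mul_comm (f t') (f t)]
  have hexp : (v t + S.sup v - (insert t S).sup v)
        + (v t' + (insert t S).sup v - (insert t' (insert t S)).sup v)
      = (v t' + S.sup v - (insert t' S).sup v)
        + (v t + (insert t' S).sup v - (insert t (insert t' S)).sup v) := by
    rw [Finset.insert_comm t t']
    ext x
    have h1 := sup_insert_point v t S x
    have h2 := sup_insert_point v t' S x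
    have h3 := sup_insert_point v t' (insert t S) x
    have h4 := sup_insert_point v t (insert t' S) x
    rw [Finset.insert_comm t t'] at h4
    simp only [Finsupp.add_apply, Finsupp.tsub_apply]
    omega
  rw [hexp]
  exact sign_cancel (by omega) _

lemma hh_cancel {S : Finset (Fin r)} {t t' : Fin r} (ht : t ∉ S) (ht' : t' ∉ S)
    (hne : t ≠ t') :
    htpyEntry 𝕜 v f S t * htpyEntry 𝕜 v f (insert t S) t'
      + htpyEntry 𝕜 v f S t' * htpyEntry 𝕜 v f (insert t' S) t = 0 := by
  rcases hne.lt_or_gt with h | h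
  · exact hh_cancel_aux v f ht ht' h
  · rw [add_comm]; exact hh_cancel_aux v f ht' ht h

lemma th_cancel {S : Finset (Fin r)} {s t : Fin r} (hs : s ∈ S) (ht : t ∉ S) :
    taylorEntry 𝕜 v S s * htpyEntry 𝕜 v f (S.erase s) t
      + htpyEntry 𝕜 v f S t * taylorEntry 𝕜 v (insert t S) s = 0 := by
  have hne : t ≠ s := fun h => ht (h ▸ hs)
  have hsmem : s ∈ insert t S := Finset.mem_insert_of_mem hs
  have hp : taylorPos S s ≤ S.card := pos_le_card hs
  have hp2 : taylorPos (insert t S) s ≤ (insert t S).card := pos_le_card hsmem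
  have hc1 : (S.erase s).card = S.card - 1 := Finset.card_erase_of_mem hs
  have hc2 : (insert t S).card = S.card + 1 := Finset.card_insert_of_notMem ht
  have hk : 1 ≤ S.card := Finset.card_pos.2 ⟨s, hs⟩
  unfold taylorEntry htpyEntry
  rw [neg_one_pow_sub' hp, neg_one_pow_sub' hp2, key_th, key_ht]
  have hexp : (S.sup v - (S.erase s).sup v)
        + (v t + (S.erase s).sup v - (insert t (S.erase s)).sup v)
      = (v t + S.sup v - (insert t S).sup v)
        + ((insert t S).sup v - ((insert t S).erase s).sup v) := by
    rw [Finset.erase_insert_of_ne hne]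
    ext x
    have h1 := sup_point v (S.erase_subset s) x
    have h2 := sup_insert_point v t (S.erase s) x
    have h3 := sup_insert_point v t S x
    have h4 := sup_point v (Finset.insert_subset_insert t (S.erase_subset s)) x
    simp only [Finsupp.add_apply, Finsupp.tsub_apply]
    omega
  rw [hexp]
  rcases lt_or_gt_of_ne hne with h | h
  · have e1 : taylorPos (S.erase s) t = taylorPos S t := pos_erase_of_not_lt (not_lt.2 h.le)
    have e2 : taylorPos (insert t S) s = taylorPos S s + 1 := pos_insert_of_lt ht h
    exact sign_cancel (by omega) _
  · have e1 : taylorPos (S.erase s) t + 1 = taylorPos S t := pos_erase_of_lt hs h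
    have e2 : taylorPos (insert t S) s = taylorPos S s := pos_insert_of_not_lt (not_lt.2 h.le)
    exact sign_cancel (by omega) _

lemma diag_th {S : Finset (Fin r)} {s : Fin r} (hs : s ∈ S) :
    taylorEntry 𝕜 v S s * htpyEntry 𝕜 v f (S.erase s) s = f s * monomial (v s) 1 := by
  have hp : taylorPos S s ≤ S.card := pos_le_card hs
  unfold taylorEntry htpyEntry
  rw [neg_one_pow_sub' hp, key_th]
  have hexp : (S.sup v - (S.erase s).sup v)
      + (v s + (S.erase s).sup v - (insert s (S.erase s)).sup v) = v s := by
    rw [Finset.insert_erase hs]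
    ext x
    have h1 := sup_point v (S.erase_subset s) x
    have h2 : (S.sup v) x ≤ v s x + ((S.erase s).sup v) x := by
      have := sup_insert_point v s (S.erase s) x
      rwa [Finset.insert_erase hs] at this
    simp only [Finsupp.add_apply, Finsupp.tsub_apply]
    omega
  rw [hexp]
  have heven : Even (S.card + taylorPos S s + ((S.erase s).card + taylorPos (S.erase s) s + 1)) := by
    have h1 : taylorPos (S.erase s) s = taylorPos S s := pos_erase_self
    have hc : (S.erase s).card = S.card - 1 := Finset.card_erase_of_mem hs
    have hk : 1 ≤ S.card := Finset.card_pos.2 ⟨s, hs⟩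
    rw [Nat.even_iff]; omega
  rw [Even.neg_one_pow heven, one_mul]

lemma diag_ht {S : Finset (Fin r)} {t : Fin r} (ht : t ∉ S) :
    htpyEntry 𝕜 v f S t * taylorEntry 𝕜 v (insert t S) t = f t * monomial (v t) 1 := by
  have hp : taylorPos (insert t S) t ≤ (insert t S).card :=
    pos_le_card (Finset.mem_insert_self t S)
  unfold taylorEntry htpyEntry
  rw [neg_one_pow_sub' hp, key_ht]
  have hexp : (v t + S.sup v - (insert t S).sup v)
      + ((insert t S).sup v - ((insert t S).erase t).sup v) = v t := by
    rw [Finset.erase_insert ht]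
    ext x
    have h1 := sup_point v (Finset.subset_insert t S) x
    have h2 := sup_insert_point v t S x
    simp only [Finsupp.add_apply, Finsupp.tsub_apply]
    omega
  rw [hexp]
  have heven : Even (S.card + taylorPos S t + 1 + ((insert t S).card + taylorPos (insert t S) t)) := by
    have h1 : taylorPos (insert t S) t = taylorPos S t := pos_insert_self
    have hc : (insert t S).card = S.card + 1 := Finset.card_insert_of_notMem ht
    rw [Nat.even_iff]; omega
  rw [Even.neg_one_pow heven, one_mul]

end Cancel


section Structural
variable {𝕜} (v : Fin r → (Fin n →₀ ℕ)) (f : Fin r → MvPolynomial (Fin n) 𝕜)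

lemma tau_single (S : Finset (Fin r)) (c : MvPolynomial (Fin n) 𝕜) :
    taylorTau 𝕜 v (Finsupp.single S c)
      = ∑ s ∈ S, Finsupp.single (S.erase s) (c * taylorEntry 𝕜 v S s) := by
  rw [taylorTau, Finsupp.lsum_single, LinearMap.toSpanSingleton_apply, Finset.smul_sum]
  exact Finset.sum_congr rfl fun s _ => by rw [Finsupp.smul_single, smul_eq_mul]

lemma htpy_single (S : Finset (Fin r)) (c : MvPolynomial (Fin n) 𝕜) :
    taylorHtpy 𝕜 v f (Finsupp.single S c)
      = ∑ t ∈ Sᶜ, Finsupp.single (insert t S) (c * htpyEntry 𝕜 v f S t) := by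
  rw [taylorHtpy, Finsupp.lsum_single, LinearMap.toSpanSingleton_apply, Finset.smul_sum]
  exact Finset.sum_congr rfl fun t _ => by rw [Finsupp.smul_single, smul_eq_mul]

lemma D_single (S : Finset (Fin r)) (c : MvPolynomial (Fin n) 𝕜) :
    (taylorTau 𝕜 v + taylorHtpy 𝕜 v f) (Finsupp.single S c)
      = (∑ s ∈ S, Finsupp.single (S.erase s) (c * taylorEntry 𝕜 v S s))
        + ∑ t ∈ Sᶜ, Finsupp.single (insert t S) (c * htpyEntry 𝕜 v f S t) := by
  rw [LinearMap.add_apply, tau_single, htpy_single]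

lemma Dsq_single (a : MvPolynomial (Fin n) 𝕜)
    (ha : a = ∑ j : Fin r, f j * monomial (v j) 1) (S : Finset (Fin r)) :
    (taylorTau 𝕜 v + taylorHtpy 𝕜 v f)
        ((taylorTau 𝕜 v + taylorHtpy 𝕜 v f) (Finsupp.single S 1))
      = Finsupp.single S a := by
  rw [D_single]
  simp only [one_mul]
  rw [map_add, map_sum, map_sum]
  simp only [D_single]
  rw [Finset.sum_add_distrib, Finset.sum_add_distrib]
  have hSum1 : ∑ s ∈ S, ∑ s' ∈ S.erase s,
      Finsupp.single ((S.erase s).erase s')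
        (taylorEntry 𝕜 v S s * taylorEntry 𝕜 v (S.erase s) s') = 0 := by
    rw [Finset.sum_sigma']
    refine Finset.sum_involution (fun p _ => ⟨p.2, p.1⟩) ?_ ?_ ?_ ?_
    · intro p hp
      rw [Finset.mem_sigma, Finset.mem_erase] at hp
      show Finsupp.single _ _ + Finsupp.single _ _ = 0
      rw [Finset.erase_right_comm (a := p.2) (b := p.1),
        ← Finsupp.single_add, tt_cancel v hp.1 hp.2.2 hp.2.1.symm, Finsupp.single_zero]
    · intro p hp _
      rw [Finset.mem_sigma, Finset.mem_erase] at hp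
      intro heq
      exact hp.2.1 (congrArg Sigma.fst heq)
    · intro p hp
      rw [Finset.mem_sigma, Finset.mem_erase] at hp ⊢
      exact ⟨hp.2.2, hp.2.1.symm, hp.1⟩
    · intro p hp; rfl
  have hSum4 : ∑ t ∈ Sᶜ, ∑ t' ∈ (insert t S)ᶜ,
      Finsupp.single (insert t' (insert t S))
        (htpyEntry 𝕜 v f S t * htpyEntry 𝕜 v f (insert t S) t') = 0 := by
    rw [Finset.sum_sigma']
    refine Finset.sum_involution (fun p _ => ⟨p.2, p.1⟩) ?_ ?_ ?_ ?_
    · intro p hp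
      rw [Finset.mem_sigma, Finset.mem_compl, Finset.mem_compl, Finset.mem_insert] at hp
      push_neg at hp
      show Finsupp.single _ _ + Finsupp.single _ _ = 0
      rw [Finset.insert_comm p.1 p.2, ← Finsupp.single_add,
        hh_cancel v f hp.1 hp.2.2 (Ne.symm hp.2.1), Finsupp.single_zero]
    · intro p hp _
      rw [Finset.mem_sigma, Finset.mem_compl, Finset.mem_compl, Finset.mem_insert] at hp
      push_neg at hp
      intro heq
      exact hp.2.1 (congrArg Sigma.fst heq)
    · intro p hp
      rw [Finset.mem_sigma, Finset.mem_compl, Finset.mem_compl, Finset.mem_insert] at hp ⊢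
      push_neg at hp ⊢
      exact ⟨hp.2.2, Ne.symm hp.2.1, hp.1⟩
    · intro p hp; rfl
  have hSum2 : ∑ s ∈ S, ∑ t ∈ (S.erase s)ᶜ,
      Finsupp.single (insert t (S.erase s))
        (taylorEntry 𝕜 v S s * htpyEntry 𝕜 v f (S.erase s) t)
      = (∑ s ∈ S, Finsupp.single S (f s * monomial (v s) 1))
        + ∑ s ∈ S, ∑ t ∈ Sᶜ, Finsupp.single (insert t (S.erase s))
            (taylorEntry 𝕜 v S s * htpyEntry 𝕜 v f (S.erase s) t) := by
    rw [← Finset.sum_add_distrib]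
    refine Finset.sum_congr rfl fun s hs => ?_
    rw [Finset.compl_erase, Finset.sum_insert (by simp [hs]), Finset.insert_erase hs,
      diag_th v f hs]
  have hSum3 : ∑ t ∈ Sᶜ, ∑ s ∈ insert t S,
      Finsupp.single ((insert t S).erase s)
        (htpyEntry 𝕜 v f S t * taylorEntry 𝕜 v (insert t S) s)
      = (∑ t ∈ Sᶜ, Finsupp.single S (f t * monomial (v t) 1))
        + ∑ t ∈ Sᶜ, ∑ s ∈ S, Finsupp.single ((insert t S).erase s)
            (htpyEntry 𝕜 v f S t * taylorEntry 𝕜 v (insert t S) s) := by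
    rw [← Finset.sum_add_distrib]
    refine Finset.sum_congr rfl fun t ht => ?_
    rw [Finset.mem_compl] at ht
    rw [Finset.sum_insert ht, Finset.erase_insert ht, diag_ht v f ht]
  rw [hSum1, hSum4, hSum2, hSum3, zero_add, add_zero, add_add_add_comm]
  have hoff : (∑ s ∈ S, ∑ t ∈ Sᶜ, Finsupp.single (insert t (S.erase s))
        (taylorEntry 𝕜 v S s * htpyEntry 𝕜 v f (S.erase s) t))
      + ∑ t ∈ Sᶜ, ∑ s ∈ S, Finsupp.single ((insert t S).erase s)
        (htpyEntry 𝕜 v f S t * taylorEntry 𝕜 v (insert t S) s) = 0 := by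
    rw [Finset.sum_comm (s := Sᶜ), ← Finset.sum_add_distrib]
    refine Finset.sum_eq_zero fun s hs => ?_
    rw [← Finset.sum_add_distrib]
    refine Finset.sum_eq_zero fun t ht => ?_
    rw [Finset.mem_compl] at ht
    have hne : t ≠ s := fun h => ht (h ▸ hs)
    rw [Finset.erase_insert_of_ne hne, ← Finsupp.single_add, th_cancel v f hs ht,
      Finsupp.single_zero]
  rw [hoff, add_zero, Finset.sum_add_sum_compl, ← Finsupp.single_finset_sum, ← ha]

end Structural


/-- In the hypersurface case `c = 1`, the endomorphism `D = τ + σ₁` of the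
total Taylor module `T = ⊕_k T_k` satisfies `D² = a₁ · id_T`; moreover `D` exchanges the even
part `⊕_{|S| even} Q ε_S` and the odd part `⊕_{|S| odd} Q ε_S`, so the restrictions of `D`
between the even and the odd part form a matrix factorization of `a₁`.
Here `m_j = x^{v j}` and `a₁ = Σ_j f_j m_j`. -/
theorem taylor_matrix_factorization {𝕜 : Type*} [Field 𝕜] {n r : ℕ}
    (v : Fin r → (Fin n →₀ ℕ)) (a : MvPolynomial (Fin n) 𝕜)
    (f : Fin r → MvPolynomial (Fin n) 𝕜)
    (ha : a = ∑ j : Fin r, f j * monomial (v j) 1) :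
    ((taylorTau 𝕜 v + taylorHtpy 𝕜 v f) ∘ₗ (taylorTau 𝕜 v + taylorHtpy 𝕜 v f) =
      a • LinearMap.id) ∧
    (∀ S : Finset (Fin r), Even S.card →
      (taylorTau 𝕜 v + taylorHtpy 𝕜 v f) (Finsupp.single S 1) ∈
        Submodule.span (MvPolynomial (Fin n) 𝕜)
          {x : TaylorModule 𝕜 n r |
            ∃ S' : Finset (Fin r), Odd S'.card ∧ x = Finsupp.single S' 1}) ∧
    (∀ S : Finset (Fin r), Odd S.card →
      (taylorTau 𝕜 v + taylorHtpy 𝕜 v f) (Finsupp.single S 1) ∈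
        Submodule.span (MvPolynomial (Fin n) 𝕜)
          {x : TaylorModule 𝕜 n r |
            ∃ S' : Finset (Fin r), Even S'.card ∧ x = Finsupp.single S' 1}) := by
  refine ⟨?_, ?_, ?_⟩
  · apply Finsupp.lhom_ext
    intro S c
    rw [LinearMap.comp_apply, LinearMap.smul_apply, LinearMap.id_apply]
    have hc : (Finsupp.single S c : TaylorModule 𝕜 n r) = c • Finsupp.single S 1 := by
      rw [Finsupp.smul_single, smul_eq_mul, mul_one]
    rw [hc, map_smul, map_smul, Dsq_single v f a ha S, Finsupp.smul_single, smul_eq_mul,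
      Finsupp.smul_single, smul_eq_mul, mul_one, mul_comm]
    rw [Finsupp.smul_single, smul_eq_mul]
  · intro S hS
    rw [D_single]
    simp only [one_mul]
    refine Submodule.add_mem _ (Submodule.sum_mem _ fun s hs => ?_)
      (Submodule.sum_mem _ fun t ht => ?_)
    · have h1 : (Finsupp.single (S.erase s) (taylorEntry 𝕜 v S s) : TaylorModule 𝕜 n r)
          = taylorEntry 𝕜 v S s • Finsupp.single (S.erase s) 1 := by
        rw [Finsupp.smul_single, smul_eq_mul, mul_one]
      rw [h1]
      refine Submodule.smul_mem _ _ (Submodule.subset_span ⟨S.erase s, ?_, rfl⟩)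
      rw [Finset.card_erase_of_mem hs]
      exact Nat.Even.sub_odd (Finset.card_pos.2 ⟨s, hs⟩) hS odd_one
    · have h1 : (Finsupp.single (insert t S) (htpyEntry 𝕜 v f S t) : TaylorModule 𝕜 n r)
          = htpyEntry 𝕜 v f S t • Finsupp.single (insert t S) 1 := by
        rw [Finsupp.smul_single, smul_eq_mul, mul_one]
      rw [h1]
      refine Submodule.smul_mem _ _ (Submodule.subset_span ⟨insert t S, ?_, rfl⟩)
      rw [Finset.card_insert_of_notMem (Finset.mem_compl.1 ht)]
      exact Even.add_one hS
  · intro S hS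
    rw [D_single]
    simp only [one_mul]
    refine Submodule.add_mem _ (Submodule.sum_mem _ fun s hs => ?_)
      (Submodule.sum_mem _ fun t ht => ?_)
    · have h1 : (Finsupp.single (S.erase s) (taylorEntry 𝕜 v S s) : TaylorModule 𝕜 n r)
          = taylorEntry 𝕜 v S s • Finsupp.single (S.erase s) 1 := by
        rw [Finsupp.smul_single, smul_eq_mul, mul_one]
      rw [h1]
      refine Submodule.smul_mem _ _ (Submodule.subset_span ⟨S.erase s, ?_, rfl⟩)
      rw [Finset.card_erase_of_mem hs]
      exact Nat.Odd.sub_odd hS odd_one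
    · have h1 : (Finsupp.single (insert t S) (htpyEntry 𝕜 v f S t) : TaylorModule 𝕜 n r)
          = htpyEntry 𝕜 v f S t • Finsupp.single (insert t S) 1 := by
        rw [Finsupp.smul_single, smul_eq_mul, mul_one]
      rw [h1]
      refine Submodule.smul_mem _ _ (Submodule.subset_span ⟨insert t S, ?_, rfl⟩)
      rw [Finset.card_insert_of_notMem (Finset.mem_compl.1 ht)]
      exact Odd.add_one hS
end
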